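/- For every z ∈ A^ℕ and every n ∈ ℕ, the difference between two successive occurrences of the word ca in σⁿτ(z) is at least 3^{n+1}. -/

import Mathlib

namespace DurandLR

variable {A B : Type*}

/-- `u` occurs at position `i` in the one-sided sequence `x`. -/
def OccursAt (x : ℕ → A) (u : List A) (i : ℕ) : Prop :=
  ∀ k : Fin u.length, x (i + (k : ℕ)) = u.get k

/-- `u` occurs (somewhere) in the one-sided sequence `x`. -/
def Occurs (x : ℕ → A) (u : List A) : Prop := ∃ i, OccursAt x u i

/-- `u` occurs at position `i` in the two-sided sequence `x`. -/
def OccursAtZ (x : ℤ → A) (u : List A) (i : ℤ) : Prop :=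
  ∀ k : Fin u.length, x (i + (k : ℕ)) = u.get k

def OccursZ (x : ℤ → A) (u : List A) : Prop := ∃ i, OccursAtZ x u i

/-- The word `u` has exactly `m` occurrences in the finite word `w`. -/
def OccCountEq (u w : List A) (m : ℕ) : Prop :=
  {i : ℕ | u <+: w.drop i}.ncard = m

/-- `w` is a return word to `u` in the one-sided sequence `x`: `wu` occurs in `x`,
`u` is a prefix of `wu` and `u` has exactly two occurrences in `wu`. -/
def IsReturnWord (x : ℕ → A) (u w : List A) : Prop :=
  Occurs x (w ++ u) ∧ u <+: (w ++ u) ∧ OccCountEq u (w ++ u) 2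

/-- `w` is a return word to `u` in the two-sided sequence `x`. -/
def IsReturnWordZ (x : ℤ → A) (u w : List A) : Prop :=
  OccursZ x (w ++ u) ∧ u <+: (w ++ u) ∧ OccCountEq u (w ++ u) 2

/-- `x` is uniformly recurrent: every word occurring in `x` occurs with bounded gaps. -/
def UniformlyRecurrent (x : ℕ → A) : Prop :=
  ∀ u, Occurs x u → ∃ M : ℕ, ∀ i : ℕ, ∃ j, i ≤ j ∧ j < i + M ∧ OccursAt x u j

def UniformlyRecurrentZ (x : ℤ → A) : Prop :=
  ∀ u, OccursZ x u → ∃ M : ℕ, ∀ i : ℤ, ∃ j : ℤ, i ≤ j ∧ j < i + M ∧ OccursAtZ x u j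

/-- `x` is linearly recurrent with constant `K`. -/
def LinearlyRecurrentWith (x : ℕ → A) (K : ℕ) : Prop :=
  UniformlyRecurrent x ∧ ∀ u w, IsReturnWord x u w → w.length ≤ K * u.length

def LinearlyRecurrent (x : ℕ → A) : Prop := ∃ K, LinearlyRecurrentWith x K

def LinearlyRecurrentZ (x : ℤ → A) : Prop :=
  UniformlyRecurrentZ x ∧ ∃ K : ℕ, ∀ u w, IsReturnWordZ x u w → w.length ≤ K * u.length

/-- The subshift generated by a two-sided sequence `x` : all `z` whose finite subwords
occur in `x`. -/
def SubshiftGenZ (x : ℤ → A) : Set (ℤ → A) := {z | ∀ u, OccursZ z u → OccursZ x u}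

/-- The subshift generated by a one-sided sequence `x`. -/
def SubshiftGen (x : ℕ → A) : Set (ℤ → A) := {z | ∀ u, OccursZ z u → Occurs x u}

/-- A minimal subshift: nonempty and every element generates it. -/
def IsMinimalSubshift (X : Set (ℤ → A)) : Prop :=
  X.Nonempty ∧ ∀ z ∈ X, X = SubshiftGenZ z

/-- A linearly recurrent subshift: minimal and containing an LR sequence. -/
def IsLRSubshift (X : Set (ℤ → A)) : Prop :=
  IsMinimalSubshift X ∧ ∃ x ∈ X, LinearlyRecurrentZ x

def IsPeriodic (z : ℤ → A) : Prop := ∃ p : ℕ, 0 < p ∧ ∀ n : ℤ, z (n + p) = z n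

/-- Image of a finite word under a morphism (substitution). -/
def wordMap (σ : A → List B) : List A → List B
  | [] => []
  | a :: u => σ a ++ wordMap σ u

/-- Composition of two morphisms: `compM σ τ = σ ∘ τ`. -/
def compM (σ τ : A → List A) : A → List A := fun b => wordMap σ (τ b)

/-- Iterate of a morphism: `powM σ n = σ^n`. -/
def powM (σ : A → List A) : ℕ → A → List A
  | 0 => fun b => [b]
  | n + 1 => compM σ (powM σ n)

/-- `chain σ r n = σ_r ∘ σ_{r+1} ∘ ⋯ ∘ σ_{r+n-1}` (the empty composition for `n = 0`). -/
def chain (σ : ℕ → A → List A) (r : ℕ) : ℕ → A → List A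
  | 0 => fun b => [b]
  | n + 1 => fun b => wordMap (chain σ r n) (σ (r + n) b)

/-- The periodic infinite sequence `www⋯` obtained by repeating the word `w`
(with a default letter for the degenerate empty case). -/
def repSeq (w : List A) (d : A) : ℕ → A := fun i => w.getD (i % w.length) d

/-- The prefix of length `n` of the sequence `x`, as a word. -/
def seqTake (x : ℕ → A) (n : ℕ) : List A := (List.range n).map x

/-- `y` is the image of the infinite sequence `z` under the morphism `σ`:
the image of every prefix of `z` is a prefix of `y`. -/
def IsSeqImage (σ : A → List B) (z : ℕ → A) (y : ℕ → B) : Prop :=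
  ∀ n, seqTake y (wordMap σ (seqTake z n)).length = wordMap σ (seqTake z n)

/-- `σ_0 σ_1 ⋯ σ_n (aaa⋯)` converges to `x` in the product topology, where the `n`-th
approximation is the periodic sequence obtained by repeating the word `W n`. -/
def ConvergesTo (W : ℕ → List A) (d : A) (x : ℕ → A) : Prop :=
  ∀ m, ∃ N, ∀ n ≥ N, repSeq (W n) d m = x m

/-- A proper morphism: all images begin with the same letter and end with the same letter. -/
def ProperMorphism (σ : A → List A) : Prop :=
  ∃ l r : A, ∀ b, (σ b).head? = some l ∧ (σ b).getLast? = some r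

/-- Primitivity with constant `s₀` of a directive sequence of morphisms
`σ_n : A_{n+1} → A_n^*`: every `b ∈ A_r` occurs in `σ_{r+1} ⋯ σ_{r+s₀} (c)`
for every `c ∈ A_{r+s₀+1}`. -/
def PrimitiveWith (σ : ℕ → A → List A) (Aseq : ℕ → Set A) (s0 : ℕ) : Prop :=
  ∀ r : ℕ, ∀ b ∈ Aseq r, ∀ c ∈ Aseq (r + s0 + 1), b ∈ chain σ (r + 1) s0 c

/-- The data of an S-adic system: `a` belongs to every alphabet and
`σ_n` maps `A_{n+1}` into words over `A_n`. -/
def SAdicSystem (σ : ℕ → A → List A) (Aseq : ℕ → Set A) (a : A) : Prop :=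
  (∀ n, a ∈ Aseq n) ∧ (∀ n, ∀ b ∈ Aseq (n + 1), ∀ c ∈ σ n b, c ∈ Aseq n)

/-- `x` is the S-adic sequence generated by the directive sequence `σ` and letter `a`:
`σ_0 σ_1 ⋯ σ_n (aaa⋯)` converges to `x`. -/
def GeneratesSAdic (σ : ℕ → A → List A) (Aseq : ℕ → Set A) (a : A) (x : ℕ → A) : Prop :=
  SAdicSystem σ Aseq a ∧ ConvergesTo (fun n => chain σ 0 (n + 1) a) a x

/-- The complexity function `p_x(n)`: the number of distinct words of length `n`
occurring in `x`. -/
noncomputable def complexity (x : ℕ → A) (n : ℕ) : ℕ := {u : List A | u.length = n ∧ Occurs x u}.ncard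

/-- Any two successive occurrences of `u` in `x` differ by at most `M`. -/
def GapsBoundedBy (x : ℕ → A) (u : List A) (M : ℕ) : Prop :=
  ∀ i j, OccursAt x u i → OccursAt x u j → i < j →
    (∀ k, i < k → k < j → ¬ OccursAt x u k) → j - i ≤ M

/-- The finite word `x_{[p,q)}` of a two-sided sequence. -/
def zSeg (x : ℤ → A) (p q : ℤ) : List A := (List.range (q - p).toNat).map fun t => x (p + t)

/-- `w` is a return word to `u.v` in the two-sided sequence `x`: there are two
consecutive occurrences `j < k` of `uv` in `x` with `w = x_{[j+|u|, k+|u|)}`. -/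
def IsReturnWordUV (x : ℤ → A) (u v w : List A) : Prop :=
  ∃ j k : ℤ, OccursAtZ x (u ++ v) j ∧ OccursAtZ x (u ++ v) k ∧ j < k ∧
    (∀ i : ℤ, j < i → i < k → ¬ OccursAtZ x (u ++ v) i) ∧
    w = zSeg x (j + u.length) (k + u.length)

/-- The substitution `σ` on `{a,b,c} = {0,1,2}`: `σ(a)=acb`, `σ(b)=bab`, `σ(c)=cbc`. -/
def sigma3 : Fin 3 → List (Fin 3) := ![[0, 2, 1], [1, 0, 1], [2, 1, 2]]

/-- The substitution `τ` on `{a,b,c} = {0,1,2}`: `τ(a)=abc`, `τ(b)=acb`, `τ(c)=aac`. -/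
def tau3 : Fin 3 → List (Fin 3) := ![[0, 1, 2], [0, 2, 1], [0, 0, 2]]

/-- `rho n = σ τ σ² τ ⋯ σⁿ τ` (identity for `n = 0`). -/
def rho : ℕ → Fin 3 → List (Fin 3)
  | 0 => fun b => [b]
  | n + 1 => compM (rho n) (compM (powM sigma3 (n + 1)) tau3)

/-- `psi n l = σ^{n+2} τ σ^{n+3} τ ⋯ σ^{n+l+1} τ` (identity for `l = 0`). -/
def psi (n : ℕ) : ℕ → Fin 3 → List (Fin 3)
  | 0 => fun b => [b]
  | l + 1 => compM (psi n l) (compM (powM sigma3 (n + 2 + l)) tau3)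

/-- The Sturmian substitution `τ` on `{0,1}`: `τ(0)=0`, `τ(1)=10`. -/
def tau2 : Fin 2 → List (Fin 2) := ![[0], [1, 0]]

/-- The Sturmian substitution `σ` on `{0,1}`: `σ(0)=01`, `σ(1)=1`. -/
def sigma2 : Fin 2 → List (Fin 2) := ![[0, 1], [1]]

/-- `xi i k = τ^{i₁} σ^{i₂} τ^{i₃} ⋯ τ^{i_{2k-1}} σ^{i_{2k}}` (identity for `k = 0`). -/
def xi (i : ℕ → ℕ) : ℕ → Fin 2 → List (Fin 2)
  | 0 => fun b => [b]
  | k + 1 => compM (xi i k) (compM (powM tau2 (i (2 * k + 1))) (powM sigma2 (i (2 * k + 2))))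

/-- `a : ℕ → ℕ` gives (from index 1 on) the continued fraction expansion
`α = [0; a₁, a₂, a₃, …]`, expressed through the Gauss map. -/
def IsCFExpansion (α : ℝ) (a : ℕ → ℕ) : Prop :=
  ∃ β : ℕ → ℝ, β 0 = α ∧ ∀ n : ℕ,
    0 < β n ∧ β n < 1 ∧ (a (n + 1) : ℤ) = ⌊1 / β n⌋ ∧ β (n + 1) = 1 / β n - ⌊1 / β n⌋

lemma wordMap_append (σ : A → List B) (u v : List A) :
    wordMap σ (u ++ v) = wordMap σ u ++ wordMap σ v := by
  induction u with
  | nil => simp [wordMap]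
  | cons a u ih => simp [wordMap, ih]

lemma wordMap_comp (σ ρ : A → List A) (u : List A) :
    wordMap (compM σ ρ) u = wordMap σ (wordMap ρ u) := by
  induction u with
  | nil => simp [wordMap]
  | cons a u ih => simp [wordMap, compM, ih, wordMap_append]

lemma wordMap_id (u : List A) : wordMap (fun b => [b]) u = u := by
  induction u with
  | nil => rfl
  | cons a u ih => simp [wordMap, ih]

lemma wordMap_length_const {μ : A → List B} {c : ℕ} (h : ∀ b, (μ b).length = c) :
    ∀ u : List A, (wordMap μ u).length = c * u.length := by
  intro u
  induction u with
  | nil => simp [wordMap]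
  | cons a u ih => simp [wordMap, ih, h]; ring

lemma len_powM (n : ℕ) : ∀ u : List (Fin 3),
    (wordMap (powM sigma3 n) u).length = 3 ^ n * u.length := by
  induction n with
  | zero => intro u; simp [powM, wordMap_id]
  | succ n ih =>
    intro u
    have : wordMap (powM sigma3 (n+1)) u = wordMap sigma3 (wordMap (powM sigma3 n) u) := by
      show wordMap (compM sigma3 (powM sigma3 n)) u = _
      exact wordMap_comp _ _ _
    rw [this, wordMap_length_const (μ := sigma3) (c := 3) (by decide), ih]
    ring

def NoCA (w : List (Fin 3)) : Prop :=
  ∀ i : ℕ, ¬ (w[i]? = some 2 ∧ w[i+1]? = some 0)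

lemma noCA_tail {b : Fin 3} {u : List (Fin 3)} (h : NoCA (b :: u)) : NoCA u := by
  intro i ⟨h1, h2⟩
  exact h (i+1) ⟨by simpa using h1, by simpa using h2⟩

lemma noCA_sigma : ∀ w : List (Fin 3), NoCA w → NoCA (wordMap sigma3 w) := by
  intro w
  induction w with
  | nil => intro _ i ⟨h1, _⟩; simp [wordMap] at h1
  | cons b u ih =>
    intro h i ⟨h1, h2⟩
    have hlen : (sigma3 b).length = 3 := by fin_cases b <;> decide
    rcases lt_or_ge (i+1) 3 with hi | hi
    · rw [show wordMap sigma3 (b :: u) = sigma3 b ++ wordMap sigma3 u from rfl,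
        List.getElem?_append_left (by omega)] at h1
      rw [show wordMap sigma3 (b :: u) = sigma3 b ++ wordMap sigma3 u from rfl,
        List.getElem?_append_left (by omega)] at h2
      have hub : i < 2 := by omega
      interval_cases i <;> fin_cases b <;> simp_all [sigma3]
    · rcases eq_or_lt_of_le hi with hi2 | hi2
      · -- i = 2 : boundary
        have hie : i = 2 := by omega
        subst hie
        rw [show wordMap sigma3 (b :: u) = sigma3 b ++ wordMap sigma3 u from rfl,
          List.getElem?_append_left (by omega)] at h1
        rw [show wordMap sigma3 (b :: u) = sigma3 b ++ wordMap sigma3 u from rfl,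
          List.getElem?_append_right (by omega)] at h2
        have hb : b = 2 := by fin_cases b <;> simp_all [sigma3] <;> omega
        cases u with
        | nil => simp [wordMap, hlen] at h2
        | cons c u' =>
          have hclen : (sigma3 c).length = 3 := by fin_cases c <;> decide
          rw [show wordMap sigma3 (c :: u') = sigma3 c ++ wordMap sigma3 u' from rfl,
            hlen] at h2
          rw [List.getElem?_append_left (by omega)] at h2
          have hc : c = 0 := by fin_cases c <;> simp_all [sigma3]
          exact h 0 ⟨by simp [hb], by simp [hc]⟩
      · -- i ≥ 3
        rw [show wordMap sigma3 (b :: u) = sigma3 b ++ wordMap sigma3 u from rfl,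
          List.getElem?_append_right (by omega), hlen] at h1
        rw [show wordMap sigma3 (b :: u) = sigma3 b ++ wordMap sigma3 u from rfl,
          List.getElem?_append_right (by omega), hlen] at h2
        have := ih (noCA_tail h) (i - 3)
        rw [show i + 1 - 3 = i - 3 + 1 by omega] at h2
        exact this ⟨h1, h2⟩

lemma noCA_mu (n : ℕ) (b : Fin 3) : NoCA (wordMap (powM sigma3 n) (tau3 b)) := by
  induction n with
  | zero =>
    rw [show powM sigma3 0 = fun b => [b] from rfl, wordMap_id]
    fin_cases b <;> intro i ⟨h1, h2⟩ <;>
      rcases i with _|_|_|i <;> simp_all [tau3]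
  | succ n ih =>
    have : wordMap (powM sigma3 (n+1)) (tau3 b)
        = wordMap sigma3 (wordMap (powM sigma3 n) (tau3 b)) := wordMap_comp _ _ _
    rw [this]
    exact noCA_sigma _ ih

lemma blocks_div {μ : Fin 3 → List (Fin 3)} {L : ℕ} (hL : 0 < L)
    (hlen : ∀ b, (μ b).length = L) (hno : ∀ b, NoCA (μ b)) :
    ∀ u : List (Fin 3), ∀ i, (wordMap μ u)[i]? = some 2 →
      (wordMap μ u)[i+1]? = some 0 → L ∣ (i+1) := by
  intro u
  induction u with
  | nil => intro i h1 _; simp [wordMap] at h1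
  | cons b u ih =>
    intro i h1 h2
    rcases lt_or_ge (i+1) L with hi | hi
    · rw [show wordMap μ (b :: u) = μ b ++ wordMap μ u from rfl,
        List.getElem?_append_left (by rw [hlen]; omega)] at h1
      rw [show wordMap μ (b :: u) = μ b ++ wordMap μ u from rfl,
        List.getElem?_append_left (by rw [hlen]; omega)] at h2
      exact absurd ⟨h1, h2⟩ (hno b i)
    · rcases eq_or_lt_of_le hi with hi2 | hi2
      · exact hi2 ▸ dvd_refl L
      · rw [show wordMap μ (b :: u) = μ b ++ wordMap μ u from rfl,
          List.getElem?_append_right (by rw [hlen]; omega), hlen] at h1 h2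
        rw [show i + 1 - L = i - L + 1 by omega] at h2
        have := ih (i - L) h1 h2
        have : L ∣ (i - L + 1) + L := Dvd.dvd.add this (dvd_refl L)
        rwa [show i - L + 1 + L = i + 1 by omega] at this

lemma seqTake_getElem? {A : Type*} (x : ℕ → A) (m i : ℕ) (h : i < m) :
    (seqTake x m)[i]? = some (x i) := by
  simp [seqTake, List.getElem?_map, List.getElem?_range, h]

lemma occ_div (z y : ℕ → Fin 3) (n : ℕ)
    (h : IsSeqImage (compM (powM sigma3 n) tau3) z y)
    {i : ℕ} (hocc : OccursAt y [2, 0] i) : 3 ^ (n + 1) ∣ i + 1 := by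
  set μ := compM (powM sigma3 n) tau3 with hμ
  have hlen : ∀ b, (μ b).length = 3 ^ (n + 1) := by
    intro b
    have h1 : μ b = wordMap (powM sigma3 n) (tau3 b) := rfl
    have h2 : (tau3 b).length = 3 := by fin_cases b <;> decide
    rw [h1, len_powM, h2]; ring
  have hno : ∀ b, NoCA (μ b) := fun b => noCA_mu n b
  set N := i + 2 with hN
  have hW := h N
  set W := wordMap μ (seqTake z N) with hWdef
  have hWlen : W.length = 3 ^ (n + 1) * N := by
    rw [hWdef, wordMap_length_const hlen]
    simp [seqTake]
  have hNlt : i + 1 < W.length := by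
    have h1 : 1 ≤ 3 ^ (n + 1) := Nat.one_le_pow _ _ (by norm_num)
    have h2 : N ≤ 3 ^ (n + 1) * N := Nat.le_mul_of_pos_left _ (by positivity)
    omega
  have e1 : W[i]? = some 2 := by
    conv_lhs => rw [← hW]
    rw [seqTake_getElem? y _ i (by omega)]
    have := hocc ⟨0, by norm_num⟩
    simpa using this
  have e2 : W[i + 1]? = some 0 := by
    conv_lhs => rw [← hW]
    rw [seqTake_getElem? y _ (i + 1) (by omega)]
    have := hocc ⟨1, by norm_num⟩
    simpa using this
  exact blocks_div (Nat.pow_pos (by norm_num)) hlen hno (seqTake z N) i e1 e2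

/-- In `σⁿτ(z)`, the difference between two successive occurrences of the word
`ca` (= `[2,0]`) is at least `3^{n+1}`. -/
theorem gap_of_ca_in_sigma_tau (z y : ℕ → Fin 3) (n : ℕ)
    (h : IsSeqImage (compM (powM sigma3 n) tau3) z y) :
    ∀ i j : ℕ, OccursAt y [2, 0] i → OccursAt y [2, 0] j → i < j →
      (∀ k, i < k → k < j → ¬ OccursAt y [2, 0] k) → 3 ^ (n + 1) ≤ j - i := by
  intro i j hi hj hij _
  have d1 := occ_div z y n h hi
  have d2 := occ_div z y n h hj
  have hd : 3 ^ (n + 1) ∣ j - i := by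
    have := Nat.dvd_sub d2 d1
    rwa [show j + 1 - (i + 1) = j - i by omega] at this
  exact Nat.le_of_dvd (by omega) hd

end DurandLR
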